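/- Let K ⊂ ℝ^n (n ≥ 4) be a convex body, H a hyperplane, p an interior point of K such that for every hyperplane Π through p the section Π ∩ K has an (n−2)-plane of symmetry parallel to H. Let W be any hyperplane orthogonal to H and π the orthogonal projection onto W. Then for every (n−2)-plane Γ ⊂ W not parallel to H with π(p) ∈ Γ, the section Γ ∩ π(K) has an (n−3)-plane of symmetry parallel to W ∩ H. -/

import Mathlib

noncomputable section

open Metric Set MeasureTheory

/-- Euclidean n-space. -/
abbrev Euc (n : ℕ) := EuclideanSpace ℝ (Fin n)

/-- A convex body: compact, convex, with nonempty interior. -/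
def IsConvexBody {n : ℕ} (K : Set (Euc n)) : Prop :=
  IsCompact K ∧ Convex ℝ K ∧ (interior K).Nonempty

/-- `f` is the (orthogonal) reflection of the space with fixed-point set the affine
subspace `A`: an involutive isometry whose fixed points are exactly `A`. -/
def IsReflectionFix {n : ℕ} (f : Euc n → Euc n) (A : AffineSubspace ℝ (Euc n)) : Prop :=
  Isometry f ∧ f ∘ f = id ∧ {x | f x = x} = (A : Set (Euc n))

/-- `A` is a plane of symmetry of the set `K`. -/
def IsSymmetryPlane {n : ℕ} (K : Set (Euc n)) (A : AffineSubspace ℝ (Euc n)) : Prop :=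
  ∃ f : Euc n → Euc n, IsReflectionFix f A ∧ f '' K = K

/-- `L` is a plane of symmetry of the set `s` within the flat `P`:
some involutive isometry of the ambient space preserves `P`, has exactly `L` as
fixed-point set inside `P`, and maps `s` onto itself. -/
def IsSymmPlaneOfIn {n : ℕ} (s : Set (Euc n)) (P L : AffineSubspace ℝ (Euc n)) : Prop :=
  L ≤ P ∧ ∃ f : Euc n → Euc n, Isometry f ∧ f ∘ f = id ∧
    f '' (P : Set (Euc n)) = (P : Set (Euc n)) ∧
    {x ∈ (P : Set (Euc n)) | f x = x} = (L : Set (Euc n)) ∧ f '' s = s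

/-- `L` is a plane of symmetry of the section `P ∩ K` within the flat `P`. -/
def IsSectionSymmPlane {n : ℕ} (K : Set (Euc n)) (P L : AffineSubspace ℝ (Euc n)) : Prop :=
  IsSymmPlaneOfIn ((P : Set (Euc n)) ∩ K) P L

/-- A hyperplane: a nonempty affine subspace whose direction has dimension `n - 1`. -/
def IsHyperplane {n : ℕ} (A : AffineSubspace ℝ (Euc n)) : Prop :=
  (A : Set (Euc n)).Nonempty ∧ Module.finrank ℝ A.direction = n - 1

/-- A rotation about the affine subspace `L`: an affine isometry fixing `L`
pointwise whose linear part has determinant one (orientation preserving). -/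
def IsRotationAbout {n : ℕ} (f : Euc n ≃ᵃⁱ[ℝ] Euc n) (L : AffineSubspace ℝ (Euc n)) : Prop :=
  (∀ x ∈ L, f x = x) ∧
    LinearMap.det (f.linearIsometryEquiv.toLinearEquiv : Euc n →ₗ[ℝ] Euc n) = 1

/-- A body of revolution with axis the line `L`. -/
def IsRevolutionBody {n : ℕ} (K : Set (Euc n)) (L : AffineSubspace ℝ (Euc n)) : Prop :=
  IsConvexBody K ∧ (L : Set (Euc n)).Nonempty ∧ Module.finrank ℝ L.direction = 1 ∧
    ∀ f : Euc n ≃ᵃⁱ[ℝ] Euc n, IsRotationAbout f L → f '' K = K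

/-- A `k`-dimensional ellipsoid: affine image of a `k`-dimensional unit ball. -/
def IsEllipsoidOfDim {n : ℕ} (k : ℕ) (s : Set (Euc n)) : Prop :=
  ∃ (T : Euc n ≃ᵃ[ℝ] Euc n) (V : Submodule ℝ (Euc n)), Module.finrank ℝ V = k ∧
    s = T '' (closedBall 0 1 ∩ (V : Set (Euc n)))

/-- The shadow boundary of `K` with respect to the direction submodule `D`:
the union of the touching sets of all supporting flats of `K` with direction `D`. -/
def shadowBoundary {n : ℕ} (K : Set (Euc n)) (D : Submodule ℝ (Euc n)) : Set (Euc n) :=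
  ⋃ l ∈ {l : AffineSubspace ℝ (Euc n) | l.direction = D ∧
      ((l : Set (Euc n)) ∩ K).Nonempty ∧ (l : Set (Euc n)) ∩ interior K = ∅},
    ((l : Set (Euc n)) ∩ K)

/-- `p` is a Larman point of `K`: every hyperplane section of `K` through `p` has
an `(n-2)`-plane of symmetry. -/
def IsLarmanPoint {n : ℕ} (K : Set (Euc n)) (p : Euc n) : Prop :=
  p ∈ interior K ∧ ∀ P : AffineSubspace ℝ (Euc n), IsHyperplane P → p ∈ P →
    ∃ L : AffineSubspace ℝ (Euc n), Module.finrank ℝ L.direction = n - 2 ∧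
      IsSectionSymmPlane K P L

/-- `p` is a revolution point of `K`: every hyperplane section of `K` through `p` has
an `(n-2)`-plane of symmetry containing `p`. -/
def IsRevolutionPoint {n : ℕ} (K : Set (Euc n)) (p : Euc n) : Prop :=
  p ∈ interior K ∧ ∀ P : AffineSubspace ℝ (Euc n), IsHyperplane P → p ∈ P →
    ∃ L : AffineSubspace ℝ (Euc n), Module.finrank ℝ L.direction = n - 2 ∧ p ∈ L ∧
      IsSectionSymmPlane K P L

/-- Projections onto hyperplanes `W` orthogonal to `H` of a body all
of whose hyperplane sections through `p` have `(n-2)`-planes of symmetry parallel to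
`H` have the corresponding symmetry property in one dimension lower. -/
theorem stmt11 {n : ℕ} (hn : 4 ≤ n) (K : Set (Euc n)) (hK : IsConvexBody K)
    (H : AffineSubspace ℝ (Euc n)) (hH : IsHyperplane H)
    (p : Euc n) (hp : p ∈ interior K)
    (hsec : ∀ P : AffineSubspace ℝ (Euc n), IsHyperplane P → p ∈ P →
      ∃ L : AffineSubspace ℝ (Euc n), Module.finrank ℝ L.direction = n - 2 ∧
        L.direction ≤ H.direction ∧ IsSectionSymmPlane K P L)
    (W : Submodule ℝ (Euc n)) (hW : Module.finrank ℝ W = n - 1) (hWperp : Wᗮ ≤ H.direction)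
    (Γ : AffineSubspace ℝ (Euc n)) (hΓW : (Γ : Set (Euc n)) ⊆ (W : Set (Euc n)))
    (hΓdim : Module.finrank ℝ Γ.direction = n - 2) (hΓnotpar : ¬ Γ.direction ≤ H.direction)
    (hpΓ : (Submodule.orthogonalProjection W p : Euc n) ∈ Γ) :
    ∃ Sig : AffineSubspace ℝ (Euc n), Module.finrank ℝ Sig.direction = n - 3 ∧
      Sig.direction ≤ W ⊓ H.direction ∧
      IsSymmPlaneOfIn
        ((Γ : Set (Euc n)) ∩ ((fun x => (Submodule.orthogonalProjection W x : Euc n)) '' K))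
        Γ Sig := by
  classical
  have hfin : Module.finrank ℝ (Euc n) = n := finrank_euclideanSpace_fin
  set π : Euc n → Euc n := fun x => (Submodule.orthogonalProjection W x : Euc n) with hπdef
  have hπ_mem : ∀ x, π x ∈ W := fun x => (Submodule.orthogonalProjection W x).2
  have hπ_id : ∀ x ∈ W, π x = x := fun x hx => Submodule.starProjection_eq_self_iff.mpr hx
  have hπ_perp : ∀ x, x - π x ∈ Wᗮ := fun x => Submodule.sub_starProjection_mem_orthogonal x
  have hπ_zero : ∀ u ∈ Wᗮ, π u = 0 := fun u hu => by
    simp [hπdef, (Submodule.starProjection_apply_eq_zero_iff (K := _)).mpr hu]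
  have hπ_add : ∀ x y, π (x + y) = π x + π y := fun x y => by simp [hπdef]
  -- basic points
  have hqΓ : π p ∈ Γ := hpΓ
  set q : Euc n := π p with hqdef
  have hqW : q ∈ W := hΓW hqΓ
  have hΓdW : Γ.direction ≤ W := by
    intro v hv
    have h1 : v +ᵥ q ∈ Γ := AffineSubspace.vadd_mem_of_mem_direction hv hqΓ
    have h2 : (v + q : Euc n) ∈ W := hΓW (by simpa [vadd_eq_add] using h1)
    simpa using W.sub_mem h2 hqW
  have hWperp_dim : Module.finrank ℝ Wᗮ = 1 := by
    have h := Submodule.finrank_add_finrank_orthogonal (𝕜 := ℝ) W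
    rw [hW, hfin] at h; omega
  -- the hyperplane Δ = π⁻¹(Γ)
  set Δ : AffineSubspace ℝ (Euc n) := AffineSubspace.mk' q (Γ.direction ⊔ Wᗮ) with hΔdef
  have hΔdir : Δ.direction = Γ.direction ⊔ Wᗮ := AffineSubspace.direction_mk' _ _
  have hqΔ : q ∈ Δ := AffineSubspace.self_mem_mk' q _
  have hΔmem : ∀ x : Euc n, x ∈ Δ ↔ π x ∈ Γ := by
    intro x
    constructor
    · intro hx
      have hx' : x -ᵥ q ∈ Γ.direction ⊔ Wᗮ := by
        rw [hΔdef] at hx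
        exact AffineSubspace.mem_mk'.mp hx
      rcases Submodule.mem_sup.mp hx' with ⟨γ, hγ, u, hu, hsum⟩
      have hxeq : x = γ + u + q := by rw [hsum, vsub_eq_sub]; abel
      have hπx : π x = γ + q := by
        rw [hxeq, hπ_add, hπ_add, hπ_id q hqW, hπ_zero u hu, hπ_id γ (hΓdW hγ), add_zero]
      rw [hπx]
      simpa [vadd_eq_add] using AffineSubspace.vadd_mem_of_mem_direction hγ hqΓ
    · intro hx
      rw [hΔdef]
      refine AffineSubspace.mem_mk'.mpr ?_
      have h1 : π x - q ∈ Γ.direction := by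
        simpa [vsub_eq_sub] using AffineSubspace.vsub_mem_direction hx hqΓ
      refine Submodule.mem_sup.mpr ⟨π x - q, h1, x - π x, hπ_perp x, ?_⟩
      rw [vsub_eq_sub]; abel
  have hΓWinf : Γ.direction ⊓ Wᗮ = ⊥ := by
    rw [Submodule.eq_bot_iff]
    intro v hv
    exact inner_self_eq_zero.mp
      (Submodule.inner_right_of_mem_orthogonal (hΓdW hv.1) hv.2)
  have hΔdim : Module.finrank ℝ Δ.direction = n - 1 := by
    rw [hΔdir]
    have h := Submodule.finrank_sup_add_finrank_inf_eq Γ.direction Wᗮ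
    rw [hΓWinf, hΓdim, hWperp_dim, finrank_bot] at h
    omega
  have hpΔ : p ∈ Δ := (hΔmem p).mpr hpΓ
  have hΔhyp : IsHyperplane Δ := ⟨⟨q, hqΔ⟩, hΔdim⟩
  obtain ⟨L, hLdim, hLH, hLsect⟩ := hsec Δ hΔhyp hpΔ
  unfold IsSectionSymmPlane IsSymmPlaneOfIn at hLsect
  obtain ⟨hLΔ, f, hfiso, hfinv, hffΔ, hffix, hfK⟩ := hLsect
  have hff : ∀ x, f (f x) = x := fun x => congrFun hfinv x
  -- f is affine (Mazur–Ulam)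
  set e : Euc n ≃ᵢ Euc n := ⟨⟨f, f, hff, hff⟩, hfiso⟩ with hedef
  set F : Euc n ≃ᵃⁱ[ℝ] Euc n := e.toRealAffineIsometryEquiv with hFdef
  have hFf : ∀ x, F x = f x := fun x => by
    have h : F.toIsometryEquiv = e := by
      rw [hFdef]; exact IsometryEquiv.coe_toRealAffineIsometryEquiv e
    calc F x = F.toIsometryEquiv x := rfl
      _ = e x := by rw [h]
      _ = f x := rfl
  set A : Euc n → Euc n := fun v => F.linearIsometryEquiv v with hAdef
  have hf_aff : ∀ (x v : Euc n), f (v + x) = A v + f x := by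
    intro x v
    have h := F.map_vadd x v
    simp only [vadd_eq_add, hFf] at h
    exact h
  have hf_aff' : ∀ x y : Euc n, f x = A (x - y) + f y := by
    intro x y
    have h := hf_aff y (x - y)
    rwa [(by abel : (x - y) + y = x)] at h
  have hA_add : ∀ v w, A (v + w) = A v + A w := fun v w => by
    simp [hAdef]
  have hA_neg : ∀ v, A (-v) = -A v := fun v => by simp [hAdef]
  have hA_inner : ∀ v w, (inner ℝ (A v) (A w) : ℝ) = inner ℝ v w := fun v w =>
    F.linearIsometryEquiv.inner_map_map v w
  have hA_norm : ∀ v, ‖A v‖ = ‖v‖ := fun v => F.linearIsometryEquiv.norm_map v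
  have hA_inv : ∀ v, A (A v) = v := by
    intro v
    have h1 : f (f (v + q)) = v + q := hff _
    rw [hf_aff, hf_aff] at h1
    have h2 : f (f q) = q := hff q
    rw [h2] at h1
    exact add_right_cancel h1
  -- L is nonempty
  obtain ⟨x₀, hx₀L⟩ : ∃ x, x ∈ L := by
    by_contra h
    push_neg at h
    have h1 : (L : Set (Euc n)) = ∅ := eq_empty_iff_forall_notMem.mpr h
    have h2 : L = ⊥ := (AffineSubspace.coe_eq_bot_iff L).mp h1
    rw [h2, AffineSubspace.direction_bot] at hLdim
    rw [finrank_bot] at hLdim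
    omega
  have hfixL : ∀ x ∈ L, f x = x := by
    intro x hx
    have h1 : x ∈ {y ∈ (Δ : Set (Euc n)) | f y = y} := by
      rw [hffix]; exact hx
    exact h1.2
  have hA_fixLd : ∀ v ∈ L.direction, A v = v := by
    intro v hv
    have h1 : v +ᵥ x₀ ∈ L := AffineSubspace.vadd_mem_of_mem_direction hv hx₀L
    have h2 : f (v + x₀) = v + x₀ := hfixL _ (by simpa [vadd_eq_add] using h1)
    rw [hf_aff, hfixL x₀ hx₀L] at h2
    exact add_right_cancel h2
  -- L.direction = H.direction ⊓ Δ.direction ⊇ Wᗮ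
  have hΔH : ¬ Δ.direction ≤ H.direction := by
    intro h
    exact hΓnotpar (le_trans (by rw [hΔdir]; exact le_sup_left) h)
  have hLled : L.direction ≤ H.direction ⊓ Δ.direction :=
    le_inf hLH (AffineSubspace.direction_le hLΔ)
  have hinf_lt : H.direction ⊓ Δ.direction < Δ.direction :=
    lt_of_le_of_ne inf_le_right (fun h => hΔH (h ▸ inf_le_left))
  have hLeq : L.direction = H.direction ⊓ Δ.direction := by
    apply Submodule.eq_of_le_of_finrank_le hLled
    have h1 := Submodule.finrank_lt_finrank_of_lt hinf_lt
    rw [hΔdim] at h1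
    rw [hLdim]
    omega
  have hWperpLd : Wᗮ ≤ L.direction := by
    rw [hLeq]
    exact le_inf hWperp (by rw [hΔdir]; exact le_sup_right)
  have hA_fixWperp : ∀ u ∈ Wᗮ, A u = u := fun u hu => hA_fixLd u (hWperpLd hu)
  -- A preserves directions
  have hfΔ' : ∀ x ∈ Δ, f x ∈ Δ := by
    intro x hx
    have h1 : f x ∈ f '' (Δ : Set (Euc n)) := mem_image_of_mem f hx
    rw [hffΔ] at h1; exact h1
  have hA_Δd : ∀ v ∈ Δ.direction, A v ∈ Δ.direction := by
    intro v hv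
    have h1 : v +ᵥ q ∈ Δ := AffineSubspace.vadd_mem_of_mem_direction hv hqΔ
    have h2 : f (v + q) ∈ Δ := hfΔ' _ (by simpa [vadd_eq_add] using h1)
    rw [hf_aff] at h2
    have h3 := AffineSubspace.vsub_mem_direction h2 (hfΔ' q hqΔ)
    simpa [vsub_eq_sub] using h3
  have hA_Γd : ∀ v ∈ Γ.direction, A v ∈ Γ.direction := by
    intro v hv
    have hvΔ : v ∈ Δ.direction := by rw [hΔdir]; exact Submodule.mem_sup_left hv
    have h1 : A v ∈ Γ.direction ⊔ Wᗮ := by rw [← hΔdir]; exact hA_Δd v hvΔ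
    rcases Submodule.mem_sup.mp h1 with ⟨γ, hγ, u, hu, hsum⟩
    have hAu : (inner ℝ (A v) u : ℝ) = 0 := by
      have h2 : A u = u := hA_fixWperp u hu
      have h3 : (inner ℝ (A v) (A u) : ℝ) = inner ℝ v u := hA_inner v u
      rw [h2] at h3
      rw [h3]
      exact Submodule.inner_right_of_mem_orthogonal (hΓdW hv) hu
    have hγu : (inner ℝ γ u : ℝ) = 0 :=
      Submodule.inner_right_of_mem_orthogonal (hΓdW hγ) hu
    have hu0 : u = 0 := by
      have h4 : (inner ℝ (γ + u) u : ℝ) = inner ℝ γ u + inner ℝ u u := inner_add_left _ _ _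
      rw [hsum, hAu, hγu, zero_add] at h4
      exact inner_self_eq_zero.mp h4.symm
    rw [← hsum, hu0, add_zero]; exact hγ
  -- the reflection R of W-part
  clear_value A F e
  clear hFf hFdef hedef hAdef
  clear F e
  set Pr : Euc n → Euc n := fun v => (Submodule.orthogonalProjection Γ.direction v : Euc n) with hPrdef
  have hPr_mem : ∀ v, Pr v ∈ Γ.direction := fun v => (Submodule.orthogonalProjection _ v).2
  have hPr_id : ∀ v ∈ Γ.direction, Pr v = v := fun v hv =>
    Submodule.starProjection_eq_self_iff.mpr hv
  have hPr_perp : ∀ v, v - Pr v ∈ Γ.directionᗮ := fun v =>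
    Submodule.sub_starProjection_mem_orthogonal v
  have hPr_zero : ∀ u ∈ Γ.directionᗮ, Pr u = 0 := fun u hu => by
    simp [hPrdef, (Submodule.starProjection_apply_eq_zero_iff (K := _)).mpr hu]
  have hPr_add : ∀ v w, Pr (v + w) = Pr v + Pr w := fun v w => by simp [hPrdef]
  set R : Euc n → Euc n := fun v => A (Pr v) + (v - Pr v) with hRdef
  have hR_Γd : ∀ v ∈ Γ.direction, R v = A v := by
    intro v hv
    simp only [hRdef, hPr_id v hv, sub_self, add_zero]
  have hR_add : ∀ v w, R (v + w) = R v + R w := by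
    intro v w
    simp only [hRdef, hPr_add, hA_add]
    abel
  have hR_sub : ∀ v w, R (v - w) = R v - R w := by
    intro v w
    have h := hR_add (v - w) w
    rw [(by abel : v - w + w = v)] at h
    exact eq_sub_of_add_eq h.symm
  have hR_norm : ∀ v, ‖R v‖ = ‖v‖ := by
    intro v
    have horth1 : (inner ℝ (A (Pr v)) (v - Pr v) : ℝ) = 0 :=
      Submodule.inner_right_of_mem_orthogonal (hA_Γd _ (hPr_mem v)) (hPr_perp v)
    have horth2 : (inner ℝ (Pr v) (v - Pr v) : ℝ) = 0 :=
      Submodule.inner_right_of_mem_orthogonal (hPr_mem v) (hPr_perp v)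
    have h1 := norm_add_sq_real (A (Pr v)) (v - Pr v)
    have h2 := norm_add_sq_real (Pr v) (v - Pr v)
    rw [(by abel : Pr v + (v - Pr v) = v)] at h2
    rw [horth1] at h1
    rw [horth2] at h2
    have h3 : ‖A (Pr v)‖ = ‖Pr v‖ := hA_norm _
    have hsq : ‖R v‖ ^ 2 = ‖v‖ ^ 2 := by
      rw [hRdef]
      simp only []
      rw [h1, h3, h2]
    calc ‖R v‖ = Real.sqrt (‖R v‖ ^ 2) := (Real.sqrt_sq (norm_nonneg _)).symm
      _ = Real.sqrt (‖v‖ ^ 2) := by rw [hsq]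
      _ = ‖v‖ := Real.sqrt_sq (norm_nonneg _)
  clear_value R Pr
  -- the descended reflection g
  set q' : Euc n := π (f q) with hq'def
  set g : Euc n → Euc n := fun x => q' + R (x - q) with hgdef
  have hg_eq : ∀ x, g x = q' + R (x - q) := fun x => rfl
  clear_value g
  have hgiso : Isometry g := by
    apply Isometry.of_dist_eq
    intro x y
    rw [dist_eq_norm, dist_eq_norm]
    have h1 : g x - g y = R (x - y) := by
      have e1 : R (x - y) = R (x - q) - R (y - q) := by
        rw [← hR_sub]; congr 1; abel
      rw [hg_eq, hg_eq, e1]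
      abel
    rw [h1, hR_norm]
  have hΓsubΔ : ∀ x ∈ Γ, x ∈ Δ := by
    intro x hx
    have hx' : π x = x := hπ_id x (hΓW hx)
    rw [hΔmem x, hx']
    exact hx
  have hmemd : ∀ x ∈ Γ, x - q ∈ Γ.direction := fun x hx => by
    simpa [vsub_eq_sub] using AffineSubspace.vsub_mem_direction hx hqΓ
  have hgΓ : ∀ x ∈ Γ, g x = π (f x) := by
    intro x hx
    have h1 : x - q ∈ Γ.direction := hmemd x hx
    rw [hf_aff' x q, hπ_add, hπ_id _ (hΓdW (hA_Γd _ h1))]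
    rw [hg_eq, hR_Γd _ h1, ← hq'def]
    abel
  have hq'Γ : q' ∈ Γ := (hΔmem (f q)).mp (hfΔ' q hqΔ)
  have hgmapsΓ : ∀ x ∈ Γ, g x ∈ Γ := by
    intro x hx
    rw [hgΓ x hx]
    exact (hΔmem (f x)).mp (hfΔ' x (hΓsubΔ x hx))
  -- g is an involution
  have hRq' : R (q' - q) = q - q' := by
    have hu : f q - q' ∈ Wᗮ := by
      rw [hq'def]; exact hπ_perp (f q)
    have h2 : f q' = -(f q - q') + q := by
      have e1 : q' - f q = -(f q - q') := by abel
      rw [hf_aff' q' (f q), hff q, e1, hA_neg, hA_fixWperp _ hu]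
    have h3 : π (f q') = q := by
      rw [h2, hπ_add]
      have : π (-(f q - q')) = 0 := by
        rw [hπ_zero _ (Submodule.neg_mem _ hu)]
      rw [this, zero_add, hπ_id q hqW]
    have h4 : g q' = q := by rw [hgΓ q' hq'Γ, h3]
    rw [hg_eq, add_comm] at h4
    exact eq_sub_of_add_eq h4
  have hRR : ∀ v, R (R v) = v := by
    intro v
    have hkey : Pr (A (Pr v) + (v - Pr v)) = A (Pr v) := by
      rw [hPr_add, hPr_id _ (hA_Γd _ (hPr_mem v)), hPr_zero _ (hPr_perp v), add_zero]
    simp only [hRdef]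
    rw [hkey, hA_inv]
    abel
  have hgg : ∀ x, g (g x) = x := by
    intro x
    rw [hg_eq, hg_eq]
    have e1 : q' + R (x - q) - q = (q' - q) + R (x - q) := by abel
    rw [e1, hR_add, hRq', hRR]
    abel
  have hginv : g ∘ g = id := funext hgg
  have hgΓset : g '' (Γ : Set (Euc n)) = (Γ : Set (Euc n)) := by
    apply Subset.antisymm
    · rintro y ⟨x, hx, rfl⟩; exact hgmapsΓ x hx
    · intro y hy; exact ⟨g y, hgmapsΓ y hy, hgg y⟩
  -- the symmetry plane Sig
  set s₀ : Euc n := π x₀ with hs₀def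
  have hx₀Δ : x₀ ∈ Δ := hLΔ hx₀L
  have hs₀Γ : s₀ ∈ Γ := (hΔmem x₀).mp hx₀Δ
  set Sig : AffineSubspace ℝ (Euc n) := AffineSubspace.mk' s₀ (Γ.direction ⊓ L.direction)
    with hSigdef
  have hSigdir : Sig.direction = Γ.direction ⊓ L.direction := AffineSubspace.direction_mk' _ _
  have hnotle : ¬ L.direction ≤ Γ.direction := by
    intro h
    have h1 : L.direction = Γ.direction :=
      Submodule.eq_of_le_of_finrank_le h (by rw [hLdim, hΓdim])
    exact hΓnotpar (by rw [← h1]; exact hLH)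
  have hsupdim : Module.finrank ℝ ↥(Γ.direction ⊔ L.direction) = n - 1 := by
    have hle : Γ.direction ⊔ L.direction ≤ Δ.direction :=
      sup_le (by rw [hΔdir]; exact le_sup_left) (AffineSubspace.direction_le hLΔ)
    have h1 := Submodule.finrank_mono hle
    rw [hΔdim] at h1
    have hlt : Γ.direction < Γ.direction ⊔ L.direction :=
      lt_of_le_of_ne le_sup_left (fun h => hnotle (by rw [h]; exact le_sup_right))
    have h2 := Submodule.finrank_lt_finrank_of_lt hlt
    rw [hΓdim] at h2
    omega
  have hinfdim : Module.finrank ℝ ↥(Γ.direction ⊓ L.direction) = n - 3 := by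
    have h := Submodule.finrank_sup_add_finrank_inf_eq Γ.direction L.direction
    rw [hsupdim, hΓdim, hLdim] at h
    omega
  have hSigleΓ : Sig ≤ Γ := by
    intro x hx
    rw [hSigdef] at hx
    have h1 : x - s₀ ∈ Γ.direction := by
      have := AffineSubspace.mem_mk'.mp hx
      rw [vsub_eq_sub] at this
      exact this.1
    have h2 := AffineSubspace.vadd_mem_of_mem_direction h1 hs₀Γ
    simpa [vadd_eq_add] using h2
  -- g fixes s₀
  have hu₀ : x₀ - s₀ ∈ Wᗮ := by rw [hs₀def]; exact hπ_perp x₀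
  have hfs₀ : f s₀ = s₀ := by
    rw [hf_aff' s₀ x₀, hfixL x₀ hx₀L]
    rw [(by abel : s₀ - x₀ = -(x₀ - s₀)), hA_neg, hA_fixWperp _ hu₀]
    abel
  have hgs₀ : g s₀ = s₀ := by
    rw [hgΓ s₀ hs₀Γ, hfs₀, hπ_id s₀ (hΓW hs₀Γ)]
  -- fixed-point set of g in Γ is Sig
  have hgfix : {x ∈ (Γ : Set (Euc n)) | g x = x} = (Sig : Set (Euc n)) := by
    ext x
    simp only [mem_setOf_eq, SetLike.mem_coe]
    constructor
    · rintro ⟨hxΓ, hgx⟩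
      have h1 : x - s₀ ∈ Γ.direction := by
        simpa [vsub_eq_sub] using AffineSubspace.vsub_mem_direction hxΓ hs₀Γ
      have h2 : R (x - s₀) = x - s₀ := by
        calc R (x - s₀) = R ((x - q) - (s₀ - q)) := by rw [(by abel : (x - q) - (s₀ - q) = x - s₀)]
          _ = R (x - q) - R (s₀ - q) := hR_sub _ _
          _ = g x - g s₀ := by rw [hg_eq, hg_eq]; abel
          _ = x - s₀ := by rw [hgx, hgs₀]
      have h3 : A (x - s₀) = x - s₀ := by rw [← hR_Γd _ h1]; exact h2
      have h4 : x - s₀ ∈ L.direction := by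
        have h5 : (x - s₀) +ᵥ x₀ ∈ Δ :=
          AffineSubspace.vadd_mem_of_mem_direction
            (by rw [hΔdir]; exact Submodule.mem_sup_left h1) hx₀Δ
        have h6 : f ((x - s₀) + x₀) = (x - s₀) + x₀ := by
          rw [hf_aff, h3, hfixL x₀ hx₀L]
        have h7 : (x - s₀) + x₀ ∈ L := by
          have h8 : (x - s₀) + x₀ ∈ {y ∈ (Δ : Set (Euc n)) | f y = y} :=
            ⟨by simpa [vadd_eq_add] using h5, h6⟩
          rw [hffix] at h8
          exact h8
        have h9 := AffineSubspace.vsub_mem_direction h7 hx₀L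
        simpa [vsub_eq_sub] using h9
      rw [hSigdef]
      refine AffineSubspace.mem_mk'.mpr ?_
      rw [vsub_eq_sub]
      exact ⟨h1, h4⟩
    · intro hx
      have h1 : x - s₀ ∈ Γ.direction ⊓ L.direction := by
        rw [hSigdef] at hx
        have := AffineSubspace.mem_mk'.mp hx
        rwa [vsub_eq_sub] at this
      have hxΓ : x ∈ Γ := hSigleΓ hx
      refine ⟨hxΓ, ?_⟩
      calc g x = g s₀ + R (x - s₀) := by
            rw [hg_eq, hg_eq]
            have e1 : x - q = (s₀ - q) + (x - s₀) := by abel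
            rw [e1, hR_add]
            abel
        _ = s₀ + A (x - s₀) := by rw [hgs₀, hR_Γd _ h1.1]
        _ = s₀ + (x - s₀) := by rw [hA_fixLd _ h1.2]
        _ = x := by abel
  -- g preserves the section Γ ∩ π(K)
  have hsecimg : g '' ((Γ : Set (Euc n)) ∩ (π '' K)) = (Γ : Set (Euc n)) ∩ (π '' K) := by
    have hmaps : ∀ y ∈ (Γ : Set (Euc n)) ∩ (π '' K), g y ∈ (Γ : Set (Euc n)) ∩ (π '' K) := by
      rintro y ⟨hyΓ, x, hxK, hpx⟩
      refine ⟨hgmapsΓ y hyΓ, ?_⟩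
      have hxΔ : x ∈ Δ := (hΔmem x).mpr (by rw [hpx]; exact hyΓ)
      have hfx : f x ∈ (Δ : Set (Euc n)) ∩ K := by
        rw [← hfK]; exact mem_image_of_mem f ⟨hxΔ, hxK⟩
      refine ⟨f x, hfx.2, ?_⟩
      have hux : x - y ∈ Wᗮ := by rw [← hpx]; exact hπ_perp x
      have h2 : f x = A (x - y) + f y := hf_aff' x y
      rw [h2, hπ_add, hA_fixWperp _ hux, hπ_zero _ hux, zero_add]
      exact (hgΓ y hyΓ).symm
    apply Subset.antisymm
    · rintro z ⟨y, hy, rfl⟩; exact hmaps y hy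
    · intro y hy; exact ⟨g y, hmaps y hy, hgg y⟩
  refine ⟨Sig, by rw [hSigdir]; exact hinfdim, ?_, hSigleΓ, g, hgiso, hginv, hgΓset, hgfix, hsecimg⟩
  rw [hSigdir]
  exact le_inf (inf_le_left.trans hΓdW) (inf_le_right.trans hLH)
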